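/- arXiv:gr-qc/0510052 — 2 statements merged into one kernel-verified Lean document; each statement's English description precedes it below -/
import Mathlib

section
/- Let {E_c}_{c∈C} be a finite family of I×I matrices over ℂ, where I = (a × b) ⊕ k, and let U ∈ Matrix b b ℂ be unitary. Then the following are equivalent: (1) there exist scalars λ_{c,x,y} ∈ ℂ with P_{xx} · (Ũ† E_c) · P_{yy} = λ_{c,x,y} • P_{xy} for all c, x, y, together with (Ũ† E_c) · P = P · (Ũ† E_c) · P for all c; (2) the subspace of ℂ^I spanned by the a×b summand is invariant under each operator Ũ† E_c, and for each c there exists X_c ∈ Matrix a a ℂ with P · (Ũ† E_c) · P = emb(X_c, 1^B). -/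
open Matrix Kronecker BigOperators

section

variable {a b k : Type*} [Fintype a] [Fintype b] [Fintype k]
  [DecidableEq a] [DecidableEq b] [DecidableEq k]

/-- The embedding of `σA ⊗ σB` into the `(a × b) ⊕ k`-indexed matrices:
the entry at `((x,i),(y,j))` (both in the `a × b` summand) is
`σA x y * σB i j`, and all other entries vanish. -/
noncomputable def emb (σA : Matrix a a ℂ) (σB : Matrix b b ℂ) :
    Matrix ((a × b) ⊕ k) ((a × b) ⊕ k) ℂ :=
  Matrix.fromBlocks (σA ⊗ₖ σB) 0 0 0

/-- The projection onto the `a × b` summand. -/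
noncomputable def Pm : Matrix ((a × b) ⊕ k) ((a × b) ⊕ k) ℂ :=
  Matrix.fromBlocks 1 0 0 0

/-- The matrix units `P_{xy} = emb (e_{xy}, 1^B)`. -/
noncomputable def Pu (x y : a) : Matrix ((a × b) ⊕ k) ((a × b) ⊕ k) ℂ :=
  emb (Matrix.single x y 1) 1

/-- `Ũ`: the `I × I` unitary acting as `1^A ⊗ U` on the `a × b` summand and
as the identity on the `k` summand. -/
noncomputable def Ut (U : Matrix b b ℂ) :
    Matrix ((a × b) ⊕ k) ((a × b) ⊕ k) ℂ :=
  Matrix.fromBlocks ((1 : Matrix a a ℂ) ⊗ₖ U) 0 0 1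

set_option linter.unusedSectionVars false

lemma mul_Pm_inl (M : Matrix ((a × b) ⊕ k) ((a × b) ⊕ k) ℂ) (r : (a × b) ⊕ k) (q : a × b) :
    ((M * Pm) : Matrix ((a × b) ⊕ k) ((a × b) ⊕ k) ℂ) r (Sum.inl q) = M r (Sum.inl q) := by
  simp [Pm, Matrix.mul_apply, Fintype.sum_sum_type, Matrix.one_apply]

lemma mul_Pm_inr (M : Matrix ((a × b) ⊕ k) ((a × b) ⊕ k) ℂ) (r : (a × b) ⊕ k) (s : k) :
    ((M * Pm) : Matrix ((a × b) ⊕ k) ((a × b) ⊕ k) ℂ) r (Sum.inr s) = 0 := by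
  simp [Pm, Matrix.mul_apply, Fintype.sum_sum_type]

lemma Pm_mul_inl (M : Matrix ((a × b) ⊕ k) ((a × b) ⊕ k) ℂ) (p : a × b) (q : (a × b) ⊕ k) :
    ((Pm * M) : Matrix ((a × b) ⊕ k) ((a × b) ⊕ k) ℂ) (Sum.inl p) q = M (Sum.inl p) q := by
  simp [Pm, Matrix.mul_apply, Fintype.sum_sum_type, Matrix.one_apply]

lemma Pm_mul_inr (M : Matrix ((a × b) ⊕ k) ((a × b) ⊕ k) ℂ) (s : k) (q : (a × b) ⊕ k) :
    ((Pm * M) : Matrix ((a × b) ⊕ k) ((a × b) ⊕ k) ℂ) (Sum.inr s) q = 0 := by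
  simp [Pm, Matrix.mul_apply, Fintype.sum_sum_type]

lemma inv_iff (M : Matrix ((a × b) ⊕ k) ((a × b) ⊕ k) ℂ) :
    (M * Pm = Pm * M * Pm) ↔
      (∀ v : ((a × b) ⊕ k) → ℂ, (∀ s : k, v (Sum.inr s) = 0) →
        ∀ s : k, (M.mulVec v) (Sum.inr s) = 0) := by
  have hA : (M * Pm = Pm * M * Pm) ↔ ∀ (s : k) (q : a × b), M (Sum.inr s) (Sum.inl q) = 0 := by
    constructor
    · intro h s q
      have := congrFun (congrFun h (Sum.inr s)) (Sum.inl q)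
      rwa [mul_Pm_inl, mul_Pm_inl, Pm_mul_inr] at this
    · intro h
      ext r q
      rcases q with q | s
      · rw [mul_Pm_inl, mul_Pm_inl]
        rcases r with p | s
        · rw [Pm_mul_inl]
        · rw [Pm_mul_inr, h]
      · rw [mul_Pm_inr, mul_Pm_inr]
  rw [hA]
  constructor
  · intro h v hv s
    simp [Matrix.mulVec, dotProduct, Fintype.sum_sum_type, hv, h]
  · intro h s q
    have := h (fun r => if r = Sum.inl q then 1 else 0) (by simp) s
    simpa [Matrix.mulVec, dotProduct] using this

lemma Pm_eq_emb : (Pm : Matrix ((a × b) ⊕ k) ((a × b) ⊕ k) ℂ) = emb 1 1 := by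
  simp [Pm, emb, Matrix.one_kronecker_one]

lemma emb_mul (A A' : Matrix a a ℂ) (B B' : Matrix b b ℂ) :
    (emb A B * emb A' B' : Matrix ((a × b) ⊕ k) ((a × b) ⊕ k) ℂ) = emb (A * A') (B * B') := by
  simp [emb, Matrix.fromBlocks_multiply, Matrix.mul_kronecker_mul]

lemma emb_smul (r : ℂ) (A : Matrix a a ℂ) (B : Matrix b b ℂ) :
    (emb (r • A) B : Matrix ((a × b) ⊕ k) ((a × b) ⊕ k) ℂ) = r • emb A B := by
  simp [emb, Matrix.smul_kronecker, Matrix.fromBlocks_smul]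

lemma Pu_mul_left (x : a) (i : b) (N : Matrix ((a × b) ⊕ k) ((a × b) ⊕ k) ℂ)
    (q : (a × b) ⊕ k) :
    ((Pu x x * N) : Matrix ((a × b) ⊕ k) ((a × b) ⊕ k) ℂ) (Sum.inl (x, i)) q
      = N (Sum.inl (x, i)) q := by
  simp [Pu, emb, Matrix.mul_apply, Fintype.sum_sum_type, Fintype.sum_prod_type,
    Matrix.single, Matrix.one_apply, ite_and]

lemma Pu_mul_right (y : a) (j : b) (N : Matrix ((a × b) ⊕ k) ((a × b) ⊕ k) ℂ)
    (r : (a × b) ⊕ k) :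
    ((N * Pu y y) : Matrix ((a × b) ⊕ k) ((a × b) ⊕ k) ℂ) r (Sum.inl (y, j))
      = N r (Sum.inl (y, j)) := by
  simp [Pu, emb, Matrix.mul_apply, Fintype.sum_sum_type, Fintype.sum_prod_type,
    Matrix.single, Matrix.one_apply, ite_and]

lemma alg_iff (M : Matrix ((a × b) ⊕ k) ((a × b) ⊕ k) ℂ) :
    (∃ lam : a → a → ℂ, ∀ x y : a,
        Pu x x * M * Pu y y = lam x y • Pu x y) ↔
      ∃ X : Matrix a a ℂ, Pm * M * Pm = emb X 1 := by
  constructor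
  · rintro ⟨lam, h⟩
    refine ⟨Matrix.of lam, ?_⟩
    ext r q
    rcases r with ⟨x, i⟩ | s
    · rcases q with ⟨y, j⟩ | s
      · have := congrFun (congrFun (h x y) (Sum.inl (x, i))) (Sum.inl (y, j))
        rw [Pu_mul_right, Pu_mul_left] at this
        rw [mul_Pm_inl, Pm_mul_inl, this]
        simp [Pu, emb, Matrix.single, Matrix.one_apply]
      · rw [mul_Pm_inr]; rcases s with s; simp [emb]
    · rw [Matrix.mul_assoc, Pm_mul_inr]; rcases q with q | t <;> simp [emb]
  · rintro ⟨X, h⟩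
    refine ⟨fun x y => X x y, fun x y => ?_⟩
    have h1 : Pu x x * M * Pu y y = Pu x x * (Pm * M * Pm) * Pu y y := by
      have hl : (Pu x x : Matrix ((a × b) ⊕ k) ((a × b) ⊕ k) ℂ) * Pm = Pu x x := by
        rw [Pm_eq_emb, Pu, emb_mul, mul_one, mul_one]
      have hr : (Pm : Matrix ((a × b) ⊕ k) ((a × b) ⊕ k) ℂ) * Pu y y = Pu y y := by
        rw [Pm_eq_emb, Pu, emb_mul, one_mul, one_mul]
      conv_lhs => rw [← hl, ← hr]
      simp only [Matrix.mul_assoc]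
    have key : Matrix.single x x (1 : ℂ) * X * Matrix.single y y 1
        = X x y • Matrix.single x y 1 := by
      ext p q
      simp only [Matrix.mul_apply, Matrix.single, Matrix.of_apply, Matrix.smul_apply,
        smul_eq_mul, ite_and, ite_mul, mul_ite, zero_mul, mul_zero, one_mul, mul_one,
        Finset.sum_ite_eq, Finset.sum_ite_eq', Finset.mem_univ, if_true, Finset.sum_ite_irrel,
        Finset.sum_const_zero]
      by_cases hp : x = p <;> by_cases hq : y = q <;> simp [hp, hq]
    rw [h1, h, Pu, Pu, emb_mul, emb_mul, mul_one, one_mul, key, emb_smul]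
    rfl

/-- For a family `{E c}` of `I × I` matrices and a unitary `U`
on `b`, the conditions (i) `P_{xx} (Ũᴴ E_c) P_{yy} = λ_{c,x,y} • P_{xy}` and
(ii) `(Ũᴴ E_c) P = P (Ũᴴ E_c) P` hold iff the `a × b`-summand subspace of
`ℂ^I` is invariant under each `Ũᴴ E_c` and each compression `P (Ũᴴ E_c) P`
belongs to the algebra `B(H^A) ⊗ 1^B`, i.e. has the form `emb X_c 1`. -/
theorem kraus_conditions_iff_invariant_subspace_and_algebra
    {C : Type*} [Fintype C] [Nonempty a] [Nonempty b] [Nonempty k]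
    (E : C → Matrix ((a × b) ⊕ k) ((a × b) ⊕ k) ℂ)
    (U : Matrix b b ℂ) (hU : U ∈ Matrix.unitaryGroup b ℂ) :
    ((∃ lam : C → a → a → ℂ, ∀ (c : C) (x y : a),
        Pu x x * ((Ut U)ᴴ * E c) * Pu y y = lam c x y • Pu x y) ∧
      (∀ c : C, ((Ut U)ᴴ * E c) * Pm = Pm * ((Ut U)ᴴ * E c) * Pm)) ↔
    ((∀ (c : C) (v : ((a × b) ⊕ k) → ℂ),
        (∀ s : k, v (Sum.inr s) = 0) →
        ∀ s : k, (((Ut U)ᴴ * E c).mulVec v) (Sum.inr s) = 0) ∧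
      (∀ c : C, ∃ X : Matrix a a ℂ,
        Pm * ((Ut U)ᴴ * E c) * Pm = emb X 1)) := by
  constructor
  · rintro ⟨⟨lam, hlam⟩, hP⟩
    exact ⟨fun c => (inv_iff _).1 (hP c), fun c => (alg_iff _).1 ⟨lam c, hlam c⟩⟩
  · rintro ⟨hinv, halg⟩
    refine ⟨?_, fun c => (inv_iff _).2 (hinv c)⟩
    choose lam hlam using fun c => (alg_iff ((Ut U)ᴴ * E c)).2 (halg c)
    exact ⟨lam, hlam⟩

end
end

section
/- Let Φ be a quantum channel on I = (a × b) ⊕ k, let U ∈ Matrix b b ℂ be unitary, and suppose B is U-invariant under Φ. Then for every σ^B ∈ Matrix b b ℂ, Tr_A( Φ( (1/|a|) • emb(1^A, σ^B) ) ) = U σ^B U†, where |a| is the cardinality of a. -/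
open Matrix Kronecker BigOperators

section

variable {a b k : Type*} [Fintype a] [Fintype b] [Fintype k]
  [DecidableEq a] [DecidableEq b] [DecidableEq k]

/-- The partial trace over the `A` subsystem. -/
noncomputable def trA (M : Matrix ((a × b) ⊕ k) ((a × b) ⊕ k) ℂ) :
    Matrix b b ℂ :=
  fun i j => ∑ x : a, M (Sum.inl (x, i)) (Sum.inl (x, j))

lemma trA_emb (τ : Matrix a a ℂ) (M : Matrix b b ℂ) :
    trA (k := k) (emb τ M) = τ.trace • M := by
  ext i j
  simp [trA, emb, Matrix.trace, Matrix.diag, kroneckerMap_apply, Finset.sum_mul]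

lemma trace_emb (σA : Matrix a a ℂ) (σB : Matrix b b ℂ) :
    (emb (k := k) σA σB).trace = σA.trace * σB.trace := by
  simp [emb, Matrix.trace, Matrix.diag, Fintype.sum_sum_type, Fintype.sum_prod_type,
    kroneckerMap_apply, Finset.sum_mul, Finset.mul_sum]
  rw [Finset.sum_comm]

lemma emb_add_right (σA : Matrix a a ℂ) (B1 B2 : Matrix b b ℂ) :
    emb (k := k) σA (B1 + B2) = emb σA B1 + emb σA B2 := by
  simp [emb, Matrix.kronecker_add, Matrix.fromBlocks_add]

lemma trA_add (M N : Matrix ((a × b) ⊕ k) ((a × b) ⊕ k) ℂ) :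
    trA (M + N) = trA M + trA N := by
  ext i j; simp [trA, Finset.sum_add_distrib]

lemma trA_smul (s : ℂ) (M : Matrix ((a × b) ⊕ k) ((a × b) ⊕ k) ℂ) :
    trA (s • M) = s • trA M := by
  ext i j; simp [trA, Finset.mul_sum]

theorem traceA_of_U_invariant
    {C : Type*} [Fintype C] [Nonempty a] [Nonempty b] [Nonempty k]
    (Φ : Matrix ((a × b) ⊕ k) ((a × b) ⊕ k) ℂ →
         Matrix ((a × b) ⊕ k) ((a × b) ⊕ k) ℂ)
    (E : C → Matrix ((a × b) ⊕ k) ((a × b) ⊕ k) ℂ)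
    (hΦ : ∀ ρ, Φ ρ = ∑ c, E c * ρ * (E c)ᴴ)
    (hE : ∑ c, (E c)ᴴ * E c = 1)
    (U : Matrix b b ℂ) (hU : U ∈ Matrix.unitaryGroup b ℂ)
    (hinv : ∀ (σA : Matrix a a ℂ) (σB : Matrix b b ℂ),
        ∃ τA : Matrix a a ℂ, Φ (emb σA σB) = emb τA (U * σB * Uᴴ)) :
    ∀ σB : Matrix b b ℂ,
      trA (Φ (((Fintype.card a : ℂ))⁻¹ • emb 1 σB)) = U * σB * Uᴴ := by
  have hn : (Fintype.card a : ℂ) ≠ 0 := by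
    exact_mod_cast Nat.cast_ne_zero.mpr Fintype.card_ne_zero
  have hm : (Fintype.card b : ℂ) ≠ 0 := by
    exact_mod_cast Nat.cast_ne_zero.mpr Fintype.card_ne_zero
  -- Φ is linear
  have hsmul : ∀ (s : ℂ) ρ, Φ (s • ρ) = s • Φ ρ := by
    intro s ρ
    simp [hΦ, Matrix.mul_smul, Matrix.smul_mul, Finset.smul_sum]
  have hadd : ∀ ρ₁ ρ₂, Φ (ρ₁ + ρ₂) = Φ ρ₁ + Φ ρ₂ := by
    intro ρ₁ ρ₂
    simp [hΦ, Matrix.mul_add, Matrix.add_mul, Finset.sum_add_distrib]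
  -- Φ preserves trace
  have htr : ∀ ρ, (Φ ρ).trace = ρ.trace := by
    intro ρ
    rw [hΦ, Matrix.trace_sum]
    have : ∀ c : C, (E c * ρ * (E c)ᴴ).trace = ((E c)ᴴ * E c * ρ).trace := by
      intro c
      rw [Matrix.trace_mul_cycle]
    simp_rw [this, ← Matrix.trace_sum, ← Finset.sum_mul, hE, Matrix.one_mul]
  have hUU : Uᴴ * U = 1 := by
    exact hU.1
  -- key case: nonzero trace
  have key : ∀ σB : Matrix b b ℂ, σB.trace ≠ 0 →
      trA (Φ (((Fintype.card a : ℂ))⁻¹ • emb 1 σB)) = U * σB * Uᴴ := by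
    intro σB hσ
    obtain ⟨τA, hτ⟩ := hinv 1 σB
    have htrace : τA.trace * (U * σB * Uᴴ).trace = (Fintype.card a : ℂ) * σB.trace := by
      have := htr (emb 1 σB)
      rw [hτ, trace_emb, trace_emb] at this
      simpa [Matrix.trace_one] using this
    have hUtr : (U * σB * Uᴴ).trace = σB.trace := by
      rw [Matrix.trace_mul_cycle, hUU, Matrix.one_mul]
    have hτtr : τA.trace = (Fintype.card a : ℂ) := by
      rw [hUtr] at htrace
      exact mul_right_cancel₀ hσ htrace
    rw [hsmul, hτ, trA_smul, trA_emb, hτtr, smul_smul, inv_mul_cancel₀ hn, one_smul]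
  intro σB
  -- choose t ≠ 0 with trace σB + t * card b ≠ 0
  obtain ⟨t, ht0, htt⟩ : ∃ t : ℂ, t ≠ 0 ∧ σB.trace + t * (Fintype.card b : ℂ) ≠ 0 := by
    by_cases h : σB.trace + (Fintype.card b : ℂ) = 0
    · refine ⟨2, two_ne_zero, ?_⟩
      rw [show σB.trace = -(Fintype.card b : ℂ) by linear_combination h]
      intro h2
      apply hm
      linear_combination h2
    · exact ⟨1, one_ne_zero, by simpa using h⟩
  have hdecomp : σB + t • (1 : Matrix b b ℂ) = σB + t • 1 := rfl
  have h1 : (σB + t • (1 : Matrix b b ℂ)).trace ≠ 0 := by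
    simpa [Matrix.trace_add, Matrix.trace_smul, Matrix.trace_one, smul_eq_mul] using htt
  have h2 : (t • (1 : Matrix b b ℂ)).trace ≠ 0 := by
    simpa [Matrix.trace_smul, Matrix.trace_one, smul_eq_mul] using mul_ne_zero ht0 hm
  have hFadd : trA (Φ (((Fintype.card a : ℂ))⁻¹ • emb 1 (σB + t • 1))) =
      trA (Φ (((Fintype.card a : ℂ))⁻¹ • emb 1 σB)) +
      trA (Φ (((Fintype.card a : ℂ))⁻¹ • emb 1 (t • (1 : Matrix b b ℂ)))) := by
    rw [emb_add_right, smul_add, hadd, trA_add]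
  have e1 := key _ h1
  have e2 := key _ h2
  rw [e1, e2] at hFadd
  have : U * (σB + t • 1) * Uᴴ = U * σB * Uᴴ + U * (t • (1 : Matrix b b ℂ)) * Uᴴ := by
    noncomm_ring
  rw [this] at hFadd
  exact (add_right_cancel hFadd.symm)

end
end
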